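/- arXiv:1801.06376 — 2 statements merged into one kernel-verified Lean document; each statement's English description precedes it below -/
import Mathlib

section
/- Let H be a Hilbert space and v_1, …, v_N bounded operators on H with Σ_{s=1}^N v_s v_s* = 1 and v_s v_s v_s* v_s* = v_s v_s* for all s. Then v_{s₂}* v_{s₁}* = 0 (equivalently v_{s₁} v_{s₂} = 0) for all s₁ ≠ s₂. -/
open ContinuousLinearMap

/-- For bounded operators on a Hilbert space with `∑ vₛ vₛ* = 1` and
`vₛ vₛ vₛ* vₛ* = vₛ vₛ*`, the products `v_{s₂}* v_{s₁}*` vanish for `s₁ ≠ s₂`. -/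
theorem adjoint_products_vanish
    {H : Type*} [NormedAddCommGroup H] [InnerProductSpace ℂ H] [CompleteSpace H]
    (N : ℕ) (v : Fin N → (H →L[ℂ] H))
    (hsum : ∑ s, v s * adjoint (v s) = 1)
    (hfour : ∀ s, v s * v s * adjoint (v s) * adjoint (v s) = v s * adjoint (v s)) :
    ∀ s₁ s₂, s₁ ≠ s₂ →
      adjoint (v s₂) * adjoint (v s₁) = 0 ∧ v s₁ * v s₂ = 0 := by
  intro s₁ s₂ hne
  have h2 : ∀ (s : Fin N) (u : H),
      (inner ℂ ((v s * adjoint (v s)) u) u : ℂ) = ((‖adjoint (v s) u‖ ^ 2 : ℝ) : ℂ) := by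
    intro s u
    rw [ContinuousLinearMap.mul_apply, ← adjoint_inner_right, inner_self_eq_norm_sq_to_K]
    norm_cast
  -- Key identity: ∑ ‖vₛ* u‖² = ‖u‖²
  have key : ∀ u : H, ∑ s, ‖adjoint (v s) u‖ ^ 2 = ‖u‖ ^ 2 := by
    intro u
    have h := congrArg (fun T : H →L[ℂ] H => (inner ℂ (T u) u : ℂ)) hsum
    simp only [ContinuousLinearMap.sum_apply, ContinuousLinearMap.one_apply] at h
    rw [sum_inner] at h
    simp only [h2, inner_self_eq_norm_sq_to_K] at h
    norm_cast at h
    exact RCLike.ofReal_injective (K := ℂ) h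
  -- From hfour: ‖v s₁* v s₁* w‖² = ‖v s₁* w‖²
  have hsq : ∀ w : H,
      ‖adjoint (v s₁) (adjoint (v s₁) w)‖ ^ 2 = ‖adjoint (v s₁) w‖ ^ 2 := by
    intro w
    have h := congrArg (fun T : H →L[ℂ] H => (inner ℂ (T w) w : ℂ)) (hfour s₁)
    rw [h2 s₁ w] at h
    have hl : (inner ℂ ((v s₁ * v s₁ * adjoint (v s₁) * adjoint (v s₁)) w) w : ℂ)
        = ((‖adjoint (v s₁) (adjoint (v s₁) w)‖ ^ 2 : ℝ) : ℂ) := by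
      simp only [ContinuousLinearMap.mul_apply]
      rw [← adjoint_inner_right, ← adjoint_inner_right, inner_self_eq_norm_sq_to_K]
      norm_cast
    rw [hl] at h
    norm_cast at h
  -- main pointwise vanishing
  have main : ∀ w : H, adjoint (v s₂) (adjoint (v s₁) w) = 0 := by
    intro w
    set u := adjoint (v s₁) w with hu
    have hk := key u
    have hsplit : ∑ s, ‖adjoint (v s) u‖ ^ 2
        = ‖adjoint (v s₁) u‖ ^ 2 + ∑ s ∈ Finset.univ.erase s₁, ‖adjoint (v s) u‖ ^ 2 := by
      rw [← Finset.add_sum_erase _ _ (Finset.mem_univ s₁)]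
    rw [hsplit, hsq w, hu] at hk
    have hzero : ∑ s ∈ Finset.univ.erase s₁, ‖adjoint (v s) u‖ ^ 2 = 0 := by
      linarith [hk]
    have := (Finset.sum_eq_zero_iff_of_nonneg
      (fun s _ => by positivity)).mp hzero s₂ (Finset.mem_erase.mpr ⟨hne.symm, Finset.mem_univ s₂⟩)
    have : ‖adjoint (v s₂) u‖ = 0 := by
      nlinarith [norm_nonneg (adjoint (v s₂) u)]
    simpa using norm_eq_zero.mp this
  have h1 : adjoint (v s₂) * adjoint (v s₁) = 0 := by
    ext w
    simpa using main w
  refine ⟨h1, ?_⟩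
  have := congrArg adjoint h1
  simpa [ContinuousLinearMap.mul_def, adjoint_comp, adjoint_adjoint, map_zero] using this
end

section
/- Let A be a *-algebra and v = (v_{ij})_{1≤i,j≤2} a 2×2 matrix over A such that every row and column sums to 1 and additionally v_{s1} v_{s1}* + v_{s2} v_{s2}* = 1 for s = 1, 2. Then Σ_{s=1}^{2} v_{s t₁} v_{s t₂}* = 0 for t₁ ≠ t₂. -/
/-- For a 2×2 matrix over a unital *-algebra whose rows and columns sum to 1 and
which satisfies `v_{s1} v_{s1}* + v_{s2} v_{s2}* = 1` for each row `s`, the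
off-diagonal column sums `∑ₛ v_{s t₁} v_{s t₂}*` vanish for `t₁ ≠ t₂`. -/
theorem two_by_two_off_diagonal_column_sums_vanish
    {A : Type*} [Ring A] [StarRing A] (v : Matrix (Fin 2) (Fin 2) A)
    (hrow : ∀ i, v i 0 + v i 1 = 1)
    (hcol : ∀ j, v 0 j + v 1 j = 1)
    (hdiag : ∀ s, v s 0 * star (v s 0) + v s 1 * star (v s 1) = 1) :
    ∀ t₁ t₂, t₁ ≠ t₂ → v 0 t₁ * star (v 0 t₂) + v 1 t₁ * star (v 1 t₂) = 0 := by
  have h1 := hrow 0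
  have h2 := hrow 1
  have h3 := hcol 0
  have hb : v 0 1 = v 1 0 := by
    have : v 0 0 + v 0 1 = v 0 0 + v 1 0 := by rw [h1, h3]
    exact add_left_cancel this
  have hd : v 1 1 = v 0 0 := by
    have : v 1 0 + v 1 1 = v 1 0 + v 0 0 := by rw [h2, add_comm (v 1 0)] ; exact h3.symm ▸ rfl
    exact add_left_cancel this
  have key : v 0 0 * star (v 0 1) + v 0 1 * star (v 0 0) = 0 := by
    have hs : (v 0 0 + v 0 1) * star (v 0 0 + v 0 1) = 1 := by rw [h1]; simp
    have hdd := hdiag 0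
    rw [star_add, mul_add, add_mul, add_mul] at hs
    -- hs : v00 s00 + v01 s00 + (v00 s01 + v01 s01) = 1
    have : v 0 0 * star (v 0 1) + v 0 1 * star (v 0 0) =
        (v 0 0 * star (v 0 0) + v 0 1 * star (v 0 0) + (v 0 0 * star (v 0 1) + v 0 1 * star (v 0 1)))
        - (v 0 0 * star (v 0 0) + v 0 1 * star (v 0 1)) := by abel
    rw [this, hs, hdd, sub_self]
  intro t₁ t₂ hne
  fin_cases t₁ <;> fin_cases t₂ <;> simp_all <;>
    first
    | exact key
    | rw [add_comm]; exact key
end
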